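/- arXiv:math/0505411 — 5 statements merged into one kernel-verified Lean document; each statement's English description precedes it below -/
import Mathlib

section
/- Let $\Omega = \mathbb{N} \setminus \{0\}$ with $\mathcal{F}$ the power set and $\mathbf{P}\{2n-1\} = \mathbf{P}\{2n\} = 2^{-n-1}$ for $n \ge 1$. Define $S_1(2n-1) = 1$, $S_1(2n) = -2^{-n}$. Let $C$ be the set of random variables of the form $\gamma \cdot S_1$ where $\gamma$ is constant on each pair $\{2n-1, 2n\}$ and $\gamma S_1 \in L^\infty$. Then $C \cap L^\infty_+ = \{0\}$, i.e., the no-arbitrage condition holds. -/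
open MeasureTheory

/-- The probability measure on `ℕ` with `P{2n-1} = P{2n} = 2^{-n-1}` for `n ≥ 1`. -/
noncomputable def exPMeasure : Measure ℕ :=
  Measure.sum (fun n : ℕ =>
    (if n = 0 then 0 else (2 : ENNReal)⁻¹ ^ ((n + 1) / 2 + 1)) • Measure.dirac n)

/-- The price increment: `S₁(2n-1) = 1`, `S₁(2n) = -2^{-n}` for `n ≥ 1`. -/
noncomputable def exS1 : ℕ → ℝ :=
  fun m => if m % 2 = 1 then 1 else -((2 : ℝ)⁻¹ ^ (m / 2))

lemma exP_null_mem {s : Set ℕ} (hs : exPMeasure s = 0) {n : ℕ} (hn : 1 ≤ n) : n ∉ s := by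
  intro hns
  have hle : (if n = 0 then 0 else (2 : ENNReal)⁻¹ ^ ((n + 1) / 2 + 1)) • Measure.dirac n s
      ≤ exPMeasure s := by
    rw [exPMeasure, Measure.sum_apply _ (MeasurableSet.of_discrete (s := s))]
    exact ENNReal.le_tsum n
  rw [hs, le_zero_iff] at hle
  have hn0 : n ≠ 0 := by omega
  simp only [if_neg hn0, Measure.smul_apply, smul_eq_mul, Measure.dirac_apply_of_mem hns,
    mul_one] at hle
  exact (pow_ne_zero _ (by simp)) hle

lemma exP_zero_null : exPMeasure ({0} : Set ℕ) = 0 := by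
  rw [exPMeasure, Measure.sum_apply _ (MeasurableSet.of_discrete (s := ({0} : Set ℕ)))]
  refine ENNReal.tsum_eq_zero.2 fun n => ?_
  rcases eq_or_ne n 0 with rfl | hn
  · simp
  · rw [if_neg hn, Measure.smul_apply, smul_eq_mul,
      Measure.dirac_apply' _ (MeasurableSet.of_discrete), Set.indicator_of_notMem (by simpa)]
    simp

/-- No-arbitrage: a gain `γ • S₁` with `γ` constant on the pairs `{2n-1, 2n}` which is
a.s. nonnegative is a.s. zero. -/
theorem no_arbitrage_example2
    (x : ℕ → ℝ) (hx : ∃ γ : ℕ → ℝ, (∀ n : ℕ, 1 ≤ n → γ (2 * n - 1) = γ (2 * n)) ∧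
      (∃ M : ℝ, ∀ m : ℕ, |γ m * exS1 m| ≤ M) ∧ x = fun m => γ m * exS1 m)
    (hpos : 0 ≤ᵐ[exPMeasure] x) :
    x =ᵐ[exPMeasure] (0 : ℕ → ℝ) := by
  obtain ⟨γ, hpair, -, hxeq⟩ := hx
  -- pointwise nonnegativity on n ≥ 1
  have hpt : ∀ m : ℕ, 1 ≤ m → 0 ≤ x m := by
    intro m hm
    by_contra h
    exact (exP_null_mem (by simpa [Filter.EventuallyLE, ae_iff] using hpos) hm) (by simpa using h)
  -- on each pair, x vanishes
  have hzero : ∀ m : ℕ, 1 ≤ m → x m = 0 := by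
    have key : ∀ n : ℕ, 1 ≤ n → x (2 * n - 1) = 0 ∧ x (2 * n) = 0 := by
      intro n hn
      have hodd : (2 * n - 1) % 2 = 1 := by omega
      have heven : (2 * n) % 2 = 0 := by omega
      have hS1o : exS1 (2 * n - 1) = 1 := by simp [exS1, hodd]
      have hS1e : exS1 (2 * n) = -((2 : ℝ)⁻¹ ^ n) := by
        simp [exS1, heven]
      have h1 : 0 ≤ γ (2 * n - 1) := by
        have := hpt (2 * n - 1) (by omega)
        rw [hxeq] at this
        simpa [hS1o] using this
      have h2 : γ (2 * n) ≤ 0 := by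
        have := hpt (2 * n) (by omega)
        rw [hxeq] at this
        simp only [hS1e, mul_neg] at this
        nlinarith [pow_pos (by norm_num : (0:ℝ) < 2⁻¹) n]
      have hγ : γ (2 * n) = 0 := le_antisymm h2 (hpair n hn ▸ h1)
      have hγ' : γ (2 * n - 1) = 0 := (hpair n hn).trans hγ
      rw [hxeq]
      simp [hγ, hγ']
    intro m hm
    rcases Nat.even_or_odd m with ⟨k, hk⟩ | ⟨k, hk⟩
    · have := (key k (by omega)).2
      rwa [show 2 * k = m by omega] at this
    · have := (key (k + 1) (by omega)).1
      rwa [show 2 * (k + 1) - 1 = m by omega] at this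
  -- conclude a.e. equality
  rw [Filter.EventuallyEq, ae_iff]
  refine measure_mono_null (fun m hm => ?_) exP_zero_null
  simp only [Set.mem_setOf_eq] at hm
  by_contra h
  exact hm (hzero m (by simpa using Nat.one_le_iff_ne_zero.2 (by simpa using h)))
end

section
/- Let $\Omega = \mathbb{N}\setminus\{0\}$, $\mathbf{P}\{2n-1\} = \mathbf{P}\{2n\} = 2^{-n-1}$, $S_1(2n-1) = 1$, $S_1(2n) = -2^{-n}$. Let $f \in L^1_+(\mathbf{P})$ with $\sum_{n=1}^\infty f(2n-1) < \infty$. Define $g(2n-1) = \max\{f(2n-1), 2^{-n} f(2n)\}$ and $g(2n) = 2^n g(2n-1)$. Then $g \in L^1(\mathbf{P})$, $g \ge f$ pointwise, and $\mathbf{E}_\mathbf{P}[g \cdot S_1 \cdot h] = 0$ for every bounded function $h$ constant on each pair $\{2n-1,2n\}$. -/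
open MeasureTheory

/-! ### Auxiliary machinery -/

noncomputable def exW : ℕ → ℝ := fun n => if n = 0 then 0 else (2 : ℝ)⁻¹ ^ ((n + 1) / 2 + 1)

lemma exW_nonneg (n : ℕ) : 0 ≤ exW n := by unfold exW; split <;> positivity

lemma exW_zero : exW 0 = 0 := by simp [exW]

lemma exW_odd (k : ℕ) : exW (2 * k + 1) = (2 : ℝ)⁻¹ ^ (k + 2) := by
  unfold exW
  rw [if_neg (by omega)]
  congr 1
  omega

lemma exW_even (k : ℕ) : exW (2 * k + 2) = (2 : ℝ)⁻¹ ^ (k + 2) := by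
  unfold exW
  rw [if_neg (by omega)]
  congr 1
  omega

lemma exW_coe (n : ℕ) :
    (if n = 0 then 0 else (2 : ENNReal)⁻¹ ^ ((n + 1) / 2 + 1)) = ENNReal.ofReal (exW n) := by
  unfold exW
  split
  · simp
  · rw [ENNReal.ofReal_pow (by norm_num), ENNReal.ofReal_inv_of_pos (by norm_num)]
    norm_num

lemma tsum_ofReal_ne_top_iff {a : ℕ → ℝ} (ha : ∀ n, 0 ≤ a n) :
    (∑' n, ENNReal.ofReal (a n)) ≠ ⊤ ↔ Summable a := by
  constructor
  · intro h
    refine (ENNReal.summable_toReal h).congr fun n => ?_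
    rw [ENNReal.toReal_ofReal (ha n)]
  · intro h
    rw [← ENNReal.ofReal_tsum_of_nonneg ha h]
    exact ENNReal.ofReal_ne_top

lemma lintegral_exPMeasure (F : ℕ → ENNReal) :
    ∫⁻ a, F a ∂exPMeasure = ∑' n, ENNReal.ofReal (exW n) * F n := by
  rw [exPMeasure, lintegral_sum_measure]
  congr 1; ext n
  rw [lintegral_smul_measure, lintegral_dirac, exW_coe, smul_eq_mul]

lemma integrable_exPMeasure_iff (F : ℕ → ℝ) :
    Integrable F exPMeasure ↔ Summable (fun n => exW n * |F n|) := by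
  rw [Integrable, and_iff_right measurable_from_nat.stronglyMeasurable.aestronglyMeasurable,
    hasFiniteIntegral_def, lintegral_exPMeasure, lt_top_iff_ne_top]
  have : ∀ n : ℕ, ENNReal.ofReal (exW n) * ‖F n‖ₑ
      = ENNReal.ofReal (exW n * |F n|) := by
    intro n
    rw [ENNReal.ofReal_mul (exW_nonneg n), ← Real.norm_eq_abs, ofReal_norm]
  simp_rw [this]
  exact tsum_ofReal_ne_top_iff fun n => mul_nonneg (exW_nonneg n) (abs_nonneg _)

lemma exPMeasure_singleton (m : ℕ) : exPMeasure {m} = ENNReal.ofReal (exW m) := by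
  rw [exPMeasure, Measure.sum_apply _ (measurableSet_singleton m)]
  have : ∀ n : ℕ, ((if n = 0 then 0 else (2 : ENNReal)⁻¹ ^ ((n + 1) / 2 + 1)) • Measure.dirac n) {m}
      = if n = m then ENNReal.ofReal (exW m) else 0 := by
    intro n
    rw [Measure.smul_apply, Measure.dirac_apply, smul_eq_mul]
    by_cases h : n = m
    · subst h
      simp only [Set.indicator_of_mem (Set.mem_singleton n), Pi.one_apply, mul_one, if_pos rfl]
      exact exW_coe n
    · simp [h, Set.indicator_of_notMem (by simp [h] : n ∉ ({m} : Set ℕ))]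
  simp_rw [this]
  exact tsum_ite_eq m _

lemma integral_exPMeasure (F : ℕ → ℝ) (hF : Integrable F exPMeasure) :
    ∫ m, F m ∂exPMeasure = ∑' n, exW n * F n := by
  rw [integral_countable' hF]
  congr 1; ext n
  rw [measureReal_def, exPMeasure_singleton, ENNReal.toReal_ofReal (exW_nonneg n), smul_eq_mul]

lemma summable_of_parts {a : ℕ → ℝ}
    (ho : Summable fun k => a (2 * k + 1)) (he : Summable fun k => a (2 * k + 2)) :
    Summable a := by
  refine Summable.even_add_odd ?_ ho
  rw [← summable_nat_add_iff 1]
  exact he.congr fun k => congrArg a (by omega)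

lemma tsum_pairs_eq_zero {a : ℕ → ℝ} (hS : Summable a) (h0 : a 0 = 0)
    (hpair : ∀ k, a (2 * k + 2) = - a (2 * k + 1)) : ∑' n, a n = 0 := by
  have hinj1 : Function.Injective (fun k : ℕ => 2 * k + 1) := fun x y h => by
    simp only at h; omega
  have hinj2 : Function.Injective (fun k : ℕ => 2 * k) := fun x y h => by
    simp only at h; omega
  have ho : Summable fun k => a (2 * k + 1) := hS.comp_injective hinj1
  have heA : Summable fun k => a (2 * k) := hS.comp_injective hinj2
  rw [← tsum_even_add_odd heA ho]
  have h1 : ∑' k, a (2 * k) = ∑' k, a (2 * (k + 1)) := by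
    rw [tsum_eq_zero_add' ((summable_nat_add_iff 1).2 heA)]
    simp [h0]
  have h2 : (fun k => a (2 * (k + 1))) = fun k => - a (2 * k + 1) := funext fun k => by
    rw [show 2 * (k + 1) = 2 * k + 2 by ring, hpair k]
  rw [h1, h2, tsum_neg]
  ring

/-- If `f ∈ L¹₊` with `∑ f(2n-1) < ∞`, then `g` defined by
`g(2n-1) = max{f(2n-1), 2^{-n} f(2n)}`, `g(2n) = 2ⁿ g(2n-1)` is an integrable
function dominating `f` which lies in the polar of the cone of trading gains. -/
theorem martingale_density_example2
    (f g : ℕ → ℝ)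
    (hfint : Integrable f exPMeasure) (hfpos : ∀ n : ℕ, 1 ≤ n → 0 ≤ f n)
    (hfsum : Summable (fun n : ℕ => f (2 * (n + 1) - 1)))
    (hgodd : ∀ n : ℕ, 1 ≤ n →
      g (2 * n - 1) = max (f (2 * n - 1)) ((2 : ℝ)⁻¹ ^ n * f (2 * n)))
    (hgeven : ∀ n : ℕ, 1 ≤ n → g (2 * n) = (2 : ℝ) ^ n * g (2 * n - 1)) :
    Integrable g exPMeasure ∧
    (∀ n : ℕ, 1 ≤ n → f n ≤ g n) ∧
    ∀ h : ℕ → ℝ, (∀ n : ℕ, 1 ≤ n → h (2 * n - 1) = h (2 * n)) →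
      (∃ M : ℝ, ∀ m : ℕ, |h m| ≤ M) →
      Integrable (fun m => g m * exS1 m * h m) exPMeasure ∧
      ∫ m, g m * exS1 m * h m ∂exPMeasure = 0 := by
  -- reindexed hypotheses
  have hgo : ∀ k : ℕ, g (2 * k + 1) = max (f (2 * k + 1)) ((2 : ℝ)⁻¹ ^ (k + 1) * f (2 * k + 2)) := by
    intro k
    have h := hgodd (k + 1) (by omega)
    have e1 : 2 * (k + 1) - 1 = 2 * k + 1 := by omega
    have e2 : 2 * (k + 1) = 2 * k + 2 := by omega
    rwa [e1, e2] at h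
  have hge : ∀ k : ℕ, g (2 * k + 2) = (2 : ℝ) ^ (k + 1) * g (2 * k + 1) := by
    intro k
    have h := hgeven (k + 1) (by omega)
    have e1 : 2 * (k + 1) - 1 = 2 * k + 1 := by omega
    have e2 : 2 * (k + 1) = 2 * k + 2 := by omega
    rwa [e1, e2] at h
  have hg1 : ∀ k : ℕ, 0 ≤ g (2 * k + 1) := fun k =>
    (hfpos (2 * k + 1) (by omega)).trans (by rw [hgo k]; exact le_max_left _ _)
  have hgb : ∀ k : ℕ, g (2 * k + 1) ≤ f (2 * k + 1) + (2 : ℝ)⁻¹ ^ (k + 1) * f (2 * k + 2) := by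
    intro k
    rw [hgo k]
    exact max_le
      (le_add_of_nonneg_right (mul_nonneg (by positivity) (hfpos _ (by omega))))
      (le_add_of_nonneg_left (hfpos _ (by omega)))
  -- summability of odd part of f
  have hfo : Summable (fun k => f (2 * k + 1)) :=
    hfsum.congr fun n => congrArg f (by omega)
  have hfS : Summable (fun n => exW n * |f n|) := (integrable_exPMeasure_iff f).1 hfint
  have hfe : Summable (fun k => (2 : ℝ)⁻¹ ^ (k + 2) * f (2 * k + 2)) := by
    have hinj : Function.Injective (fun k : ℕ => 2 * k + 2) := fun x y h => by
      simp only at h; omega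
    refine (hfS.comp_injective hinj).congr fun k => ?_
    simp only [Function.comp]
    rw [exW_even, abs_of_nonneg (hfpos _ (by omega))]
  have hfe' : Summable (fun k => (2 : ℝ)⁻¹ ^ (k + 1) * f (2 * k + 2)) := by
    refine ((hfe.mul_left 2)).congr fun k => ?_
    rw [← mul_assoc]
    congr 1
    rw [pow_succ]
    ring_nf
  -- summability of g along odd indices
  have hgS : Summable (fun k => g (2 * k + 1)) :=
    Summable.of_nonneg_of_le hg1 hgb (hfo.add hfe')
  -- integrability of g
  have hgint : Integrable g exPMeasure := by
    rw [integrable_exPMeasure_iff]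
    refine summable_of_parts ?_ ?_
    · refine Summable.of_nonneg_of_le
        (fun k => mul_nonneg (exW_nonneg _) (abs_nonneg _)) (fun k => ?_)
        (hgS.mul_left ((2 : ℝ)⁻¹ ^ 2))
      rw [exW_odd, abs_of_nonneg (hg1 k)]
      refine mul_le_mul_of_nonneg_right ?_ (hg1 k)
      exact pow_le_pow_of_le_one (by norm_num) (by norm_num) (by omega)
    · refine ((hgS.mul_left ((2 : ℝ)⁻¹ ^ 1))).congr fun k => ?_
      rw [exW_even, hge k, abs_of_nonneg (mul_nonneg (by positivity) (hg1 k))]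
      have key : (2 : ℝ)⁻¹ ^ (k + 2) * 2 ^ (k + 1) = 2⁻¹ ^ (1 : ℕ) := by
        rw [pow_succ ((2 : ℝ)⁻¹) (k + 1), mul_right_comm, ← mul_pow]
        norm_num
      rw [← mul_assoc, key]
  refine ⟨hgint, ?_, ?_⟩
  · -- f ≤ g
    intro n hn
    rcases Nat.even_or_odd n with ⟨m, hm⟩ | ⟨m, hm⟩
    · -- n = 2m, m ≥ 1, so n = 2(m-1)+2
      obtain ⟨k, rfl⟩ : ∃ k, m = k + 1 := ⟨m - 1, by omega⟩
      have hn2 : n = 2 * k + 2 := by omega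
      subst hn2
      rw [hge k]
      have h1 : (2 : ℝ)⁻¹ ^ (k + 1) * f (2 * k + 2) ≤ g (2 * k + 1) := by
        rw [hgo k]; exact le_max_right _ _
      calc f (2 * k + 2) = (2 : ℝ) ^ (k + 1) * ((2 : ℝ)⁻¹ ^ (k + 1) * f (2 * k + 2)) := by
            rw [← mul_assoc, ← mul_pow]
            norm_num
        _ ≤ (2 : ℝ) ^ (k + 1) * g (2 * k + 1) := by
            apply mul_le_mul_of_nonneg_left h1 (by positivity)
    · have hn2 : n = 2 * m + 1 := by omega
      subst hn2
      rw [hgo m]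
      exact le_max_left _ _
  · -- the polar condition
    intro h hpairs ⟨M, hM⟩
    have hM0 : 0 ≤ M := (abs_nonneg _).trans (hM 0)
    have hS1 : ∀ m, |exS1 m| ≤ 1 := by
      intro m
      unfold exS1
      split
      · simp
      · rw [abs_neg, abs_of_nonneg (by positivity)]
        exact pow_le_one₀ (by norm_num) (by norm_num)
    have hFg : Integrable (fun m => g m * exS1 m * h m) exPMeasure := by
      rw [integrable_exPMeasure_iff]
      refine Summable.of_nonneg_of_le
        (fun n => mul_nonneg (exW_nonneg n) (abs_nonneg _))
        (fun n => ?_)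
        (((integrable_exPMeasure_iff g).1 hgint).mul_left M)
      calc exW n * |g n * exS1 n * h n| ≤ exW n * (|g n| * M) := by
            refine mul_le_mul_of_nonneg_left ?_ (exW_nonneg n)
            rw [abs_mul, abs_mul]
            calc |g n| * |exS1 n| * |h n| ≤ |g n| * 1 * M :=
                  mul_le_mul (mul_le_mul_of_nonneg_left (hS1 n) (abs_nonneg _)) (hM n)
                    (abs_nonneg _) (by positivity)
              _ = |g n| * M := by ring
        _ = M * (exW n * |g n|) := by ring
    refine ⟨hFg, ?_⟩
    rw [integral_exPMeasure _ hFg]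
    refine tsum_pairs_eq_zero ?_ ?_ fun k => ?_
    · refine ((integrable_exPMeasure_iff _).1 hFg).of_norm_bounded fun n => ?_
      rw [Real.norm_eq_abs, abs_mul, abs_of_nonneg (exW_nonneg n)]
    · simp [exW_zero]
    · have hhp : h (2 * k + 1) = h (2 * k + 2) := by
        have hp := hpairs (k + 1) (by omega)
        have e1 : 2 * (k + 1) - 1 = 2 * k + 1 := by omega
        have e2 : 2 * (k + 1) = 2 * k + 2 := by omega
        rwa [e1, e2] at hp
      have hS1o : exS1 (2 * k + 1) = 1 := by
        unfold exS1
        rw [if_pos (by omega)]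
      have hS1e : exS1 (2 * k + 2) = -((2 : ℝ)⁻¹ ^ (k + 1)) := by
        unfold exS1
        rw [if_neg (by omega)]
        congr 2
        omega
      show exW (2 * k + 2) * (g (2 * k + 2) * exS1 (2 * k + 2) * h (2 * k + 2))
          = -(exW (2 * k + 1) * (g (2 * k + 1) * exS1 (2 * k + 1) * h (2 * k + 1)))
      rw [exW_odd, exW_even, hS1o, hS1e, hge k, hhp]
      have key : (2 : ℝ) ^ (k + 1) * 2⁻¹ ^ (k + 1) = 1 := by
        rw [← mul_pow]; norm_num
      linear_combination (-((2 : ℝ)⁻¹ ^ (k + 2) * g (2 * k + 1) * h (2 * k + 2))) * key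
end

section
/- Let $C \subseteq L^\infty(\Omega,\mathcal{F},\mathbf{P})$ be a convex cone with $C \cap L^\infty_+ = \{0\}$ and let $f \in L^1$. If there exists $g \in L^1$ with $g \ge f$ a.s. and $\int_\Omega x g \, d\mathbf{P} \le 0$ for all $x \in C$, then there exists an $N$-function $\varphi$ such that $\sup\{\int_\Omega x f \, d\mathbf{P} : x \in C, \|x^-\|_\varphi \le 1\} < \infty$, where $\|\cdot\|_\varphi$ is the Luxemburg norm. -/
open MeasureTheory Filter Set

section Aux

variable (n : ℕ → ℝ)

/-- The de la Vallée-Poussin-type Young function adapted to tail levels `n k`. -/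
noncomputable def psiAux (t : ℝ) : ℝ :=
  (max t 0) ^ 2 / (1 + max t 0) + ∑' k : ℕ, max (t - n k) 0

/-- The (relaxed) conjugate of `psiAux`. -/
noncomputable def phiAux (a : ℝ) : ℝ :=
  max ((max a 0) ^ 2 / 2) (⨆ k : ℕ, (a * (k + 2) - psiAux n (k + 1)))

variable (hn : ∀ k : ℕ, (k : ℝ) ≤ n k)
include hn

lemma summable_psiTerm (t : ℝ) : Summable (fun k : ℕ => max (t - n k) 0) := by
  apply summable_of_ne_finset_zero (s := Finset.range ⌈t⌉₊)
  intro k hk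
  simp only [Finset.mem_range, not_lt] at hk
  have h1 : t ≤ n k := le_trans (le_trans (Nat.le_ceil t) (by exact_mod_cast hk)) (hn k)
  simp [max_eq_right, sub_nonpos.2 h1]

omit hn in
lemma quadTerm_nonneg (t : ℝ) : 0 ≤ (max t 0) ^ 2 / (1 + max t 0) := by positivity

omit hn in
lemma psiAux_nonneg (t : ℝ) : 0 ≤ psiAux n t := by
  refine add_nonneg (quadTerm_nonneg t) (tsum_nonneg fun k => le_max_right _ _)

lemma psiAux_mono : Monotone (psiAux n) := by
  intro s t hst
  have h1 : max s 0 ≤ max t 0 := max_le_max hst le_rfl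
  have h0 : (0:ℝ) ≤ max s 0 := le_max_right _ _
  refine add_le_add ?_ ?_
  · rw [div_le_div_iff₀ (by positivity) (by positivity)]
    nlinarith [mul_nonneg (mul_nonneg h0 (h0.trans h1)) (sub_nonneg.2 h1),
      mul_nonneg (sub_nonneg.2 h1) (add_nonneg h0 (h0.trans h1))]
  · exact Summable.tsum_le_tsum (fun k => max_le_max (by linarith) le_rfl)
      (summable_psiTerm n hn s) (summable_psiTerm n hn t)

lemma psiAux_lower_linear (K : ℕ) (t : ℝ) :
    (K : ℝ) * t - ∑ j ∈ Finset.range K, n j ≤ psiAux n t := by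
  have h1 : ∑ j ∈ Finset.range K, (t - n j) ≤ ∑ j ∈ Finset.range K, max (t - n j) 0 :=
    Finset.sum_le_sum fun j _ => le_max_left _ _
  have h2 : ∑ j ∈ Finset.range K, max (t - n j) 0 ≤ ∑' k : ℕ, max (t - n k) 0 :=
    Summable.sum_le_tsum _ (fun j _ => le_max_right _ _) (summable_psiTerm n hn t)
  have h3 : ∑ j ∈ Finset.range K, (t - n j) = (K : ℝ) * t - ∑ j ∈ Finset.range K, n j := by
    rw [Finset.sum_sub_distrib, Finset.sum_const, Finset.card_range]; ring_nf
  have := (quadTerm_nonneg t)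
  unfold psiAux; linarith

omit hn in
lemma psiAux_lower_quad (t : ℝ) (ht : 0 ≤ t) : t ^ 2 / (1 + t) ≤ psiAux n t := by
  unfold psiAux
  rw [max_eq_left ht]
  have : (0:ℝ) ≤ ∑' k : ℕ, max (t - n k) 0 := tsum_nonneg fun k => le_max_right _ _
  linarith

lemma gAux_bddAbove (a : ℝ) :
    BddAbove (Set.range fun k : ℕ => a * (k + 2) - psiAux n (k + 1)) := by
  set K : ℕ := ⌈|a|⌉₊ with hK
  have hKa : |a| ≤ K := Nat.le_ceil _
  refine ⟨2 * |a| + ∑ j ∈ Finset.range K, n j, ?_⟩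
  rintro y ⟨k, rfl⟩
  simp only
  have h1 : (K : ℝ) * ((k:ℝ) + 1) - ∑ j ∈ Finset.range K, n j ≤ psiAux n ((k:ℝ) + 1) :=
    psiAux_lower_linear n hn K _
  have h2 : a * ((k:ℝ) + 2) ≤ |a| * ((k:ℝ) + 2) := by
    apply mul_le_mul_of_nonneg_right (le_abs_self a) (by positivity)
  have hk0 : (0:ℝ) ≤ (k:ℝ) := Nat.cast_nonneg k
  have hK0 : (0:ℝ) ≤ (K:ℝ) := Nat.cast_nonneg K
  nlinarith [abs_nonneg a, mul_nonneg (sub_nonneg.2 hKa) hk0]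

omit hn in
lemma quad_le_phiAux (a : ℝ) : (max a 0) ^ 2 / 2 ≤ phiAux n a := le_max_left _ _

lemma gterm_le_phiAux (a : ℝ) (k : ℕ) :
    a * (k + 2) - psiAux n (k + 1) ≤ phiAux n a :=
  le_trans (le_ciSup (gAux_bddAbove n hn a) k) (le_max_right _ _)

omit hn in
lemma phiAux_nonneg (a : ℝ) : 0 ≤ phiAux n a :=
  le_trans (by positivity) (le_max_left _ _)

omit hn in
lemma phiAux_quad_lb (a : ℝ) (ha : 0 ≤ a) : a ^ 2 / 2 ≤ phiAux n a := by
  have := quad_le_phiAux n a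
  rwa [max_eq_left ha] at this

lemma phiAux_mono : Monotone (phiAux n) := by
  intro a b hab
  apply max_le
  · refine le_trans ?_ (quad_le_phiAux n b)
    have h1 : max a 0 ≤ max b 0 := max_le_max hab le_rfl
    have h0 : (0:ℝ) ≤ max a 0 := le_max_right _ _
    nlinarith
  · refine ciSup_le fun k => le_trans ?_ (gterm_le_phiAux n hn b k)
    have : a * ((k:ℝ) + 2) ≤ b * ((k:ℝ) + 2) :=
      mul_le_mul_of_nonneg_right hab (by positivity)
    linarith

lemma phiAux_le_small (a : ℝ) (h0 : 0 ≤ a) (h4 : a ≤ 1/4) : phiAux n a ≤ a ^ 2 / 2 := by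
  apply max_le
  · rw [max_eq_left h0]
  · refine le_trans (ciSup_le fun k => ?_) (by positivity)
    have hq : ((k:ℝ) + 1) ^ 2 / (1 + ((k:ℝ) + 1)) ≤ psiAux n ((k:ℝ)+1) :=
      psiAux_lower_quad n _ (by positivity)
    have hk0 : (0:ℝ) ≤ (k:ℝ) := Nat.cast_nonneg k
    have key : a * ((k:ℝ) + 2) ≤ ((k:ℝ) + 1) ^ 2 / (1 + ((k:ℝ) + 1)) := by
      rw [le_div_iff₀ (by positivity)]
      nlinarith
    linarith

lemma phiAux_zero : phiAux n 0 = 0 :=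
  le_antisymm (by simpa using phiAux_le_small n hn 0 le_rfl (by norm_num)) (phiAux_nonneg n 0)

lemma phiAux_young (a b : ℝ) (ha : 0 ≤ a) (hb : 0 ≤ b) :
    a * b ≤ phiAux n a + psiAux n b := by
  rcases le_or_gt b 1 with hb1 | hb1
  · have h1 : a ^ 2 / 2 ≤ phiAux n a := phiAux_quad_lb n a ha
    have h2 : b ^ 2 / (1 + b) ≤ psiAux n b := psiAux_lower_quad n b hb
    have h3 : b ^ 2 / 2 ≤ b ^ 2 / (1 + b) := by
      apply div_le_div_of_nonneg_left (by positivity) (by linarith) (by linarith)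
    nlinarith [sq_nonneg (a - b)]
  · set k : ℕ := ⌊b - 1⌋₊ with hk
    have hk1 : (k : ℝ) ≤ b - 1 := Nat.floor_le (by linarith)
    have hk2 : b - 1 < (k : ℝ) + 1 := Nat.lt_floor_add_one _
    have h1 : a * b ≤ a * ((k:ℝ) + 2) := mul_le_mul_of_nonneg_left (by linarith) ha
    have h2 : a * ((k:ℝ) + 2) - psiAux n ((k:ℝ) + 1) ≤ phiAux n a := gterm_le_phiAux n hn a k
    have h3 : psiAux n ((k:ℝ) + 1) ≤ psiAux n b := psiAux_mono n hn (by linarith)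
    linarith

lemma phiAux_convexOn : ConvexOn ℝ (Ici (0:ℝ)) (phiAux n) := by
  refine ⟨convex_Ici 0, fun x hx y hy a b ha hb hab => ?_⟩
  simp only [smul_eq_mul, mem_Ici] at *
  apply max_le
  · have hz : 0 ≤ a * x + b * y := by positivity
    rw [max_eq_left hz]
    have h1 : x ^ 2 / 2 ≤ phiAux n x := phiAux_quad_lb n x hx
    have h2 : y ^ 2 / 2 ≤ phiAux n y := phiAux_quad_lb n y hy
    have key : (a * x + b * y) ^ 2 / 2 ≤ a * (x ^ 2 / 2) + b * (y ^ 2 / 2) := by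
      nlinarith [sq_nonneg (x - y), mul_nonneg ha hb]
    calc (a * x + b * y) ^ 2 / 2 ≤ a * (x ^ 2 / 2) + b * (y ^ 2 / 2) := key
      _ ≤ a * phiAux n x + b * phiAux n y := by
          exact add_le_add (mul_le_mul_of_nonneg_left h1 ha) (mul_le_mul_of_nonneg_left h2 hb)
  · refine ciSup_le fun k => ?_
    have h1 : x * ((k:ℝ) + 2) - psiAux n ((k:ℝ) + 1) ≤ phiAux n x := gterm_le_phiAux n hn x k
    have h2 : y * ((k:ℝ) + 2) - psiAux n ((k:ℝ) + 1) ≤ phiAux n y := gterm_le_phiAux n hn y k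
    have heq : (a * x + b * y) * ((k:ℝ) + 2) - psiAux n ((k:ℝ) + 1)
        = a * (x * ((k:ℝ) + 2) - psiAux n ((k:ℝ) + 1))
          + b * (y * ((k:ℝ) + 2) - psiAux n ((k:ℝ) + 1)) := by
      have : a = 1 - b := by linarith
      rw [this]; ring
    rw [heq]
    exact add_le_add (mul_le_mul_of_nonneg_left h1 ha) (mul_le_mul_of_nonneg_left h2 hb)

lemma phiAux_measurable : Measurable (phiAux n) := (phiAux_mono n hn).measurable

lemma phiAux_le_iSup (t : ℝ) (ht : 0 ≤ t) :
    phiAux n t ≤ ⨆ m : ℕ, phiAux n (t / (1 + ((m:ℝ) + 1)⁻¹)) := by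
  set lam : ℕ → ℝ := fun m => 1 + ((m:ℝ) + 1)⁻¹ with hlam
  have hlam1 : ∀ m, 1 ≤ lam m := fun m => by
    simp only [hlam]; have : (0:ℝ) < (m:ℝ) + 1 := by positivity
    nlinarith [inv_nonneg.2 this.le]
  have hlampos : ∀ m, 0 < lam m := fun m => lt_of_lt_of_le one_pos (hlam1 m)
  have hdivle : ∀ m, t / lam m ≤ t := fun m => div_le_self ht (hlam1 m)
  have hdivnn : ∀ m, 0 ≤ t / lam m := fun m => div_nonneg ht (hlampos m).le
  have hbdd : BddAbove (Set.range fun m : ℕ => phiAux n (t / lam m)) :=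
    ⟨phiAux n t, by rintro y ⟨m, rfl⟩; exact phiAux_mono n hn (hdivle m)⟩
  have htend : Tendsto (fun m : ℕ => t / lam m) atTop (nhds t) := by
    have h1 : Tendsto (fun m : ℕ => ((m:ℝ) + 1)⁻¹) atTop (nhds 0) := by
      simpa [one_div] using tendsto_one_div_add_atTop_nhds_zero_nat (𝕜 := ℝ)
    have h2 : Tendsto lam atTop (nhds 1) := by
      simpa using (tendsto_const_nhds (x := (1:ℝ))).add h1
    convert (tendsto_const_nhds (x := t)).div h2 one_ne_zero using 2 <;> simp
  apply max_le
  · rw [max_eq_left ht]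
    refine le_of_tendsto ((htend.pow 2).div_const 2) (Eventually.of_forall fun m => ?_)
    exact le_trans (by simpa [max_eq_left (hdivnn m)] using quad_le_phiAux n (t / lam m))
      (le_ciSup hbdd m)
  · refine ciSup_le fun k => ?_
    have htend2 : Tendsto (fun m : ℕ => (t / lam m) * ((k:ℝ) + 2) - psiAux n ((k:ℝ) + 1))
        atTop (nhds (t * ((k:ℝ) + 2) - psiAux n ((k:ℝ) + 1))) :=
      ((htend.mul_const _).sub tendsto_const_nhds)
    refine le_of_tendsto htend2 (Eventually.of_forall fun m => ?_)
    exact le_trans (gterm_le_phiAux n hn (t / lam m) k) (le_ciSup hbdd m)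

end Aux
/-- The Luxemburg norm of a function `x` w.r.t. a Young function `φ` and measure `P`. -/
noncomputable def luxemburgNorm {Ω : Type*} [MeasurableSpace Ω] (P : Measure Ω)
    (φ : ℝ → ℝ) (x : Ω → ℝ) : ℝ :=
  sInf {lam : ℝ | 0 < lam ∧ ∫⁻ ω, ENNReal.ofReal (φ (|x ω| / lam)) ∂P ≤ 1}

/-- If `f ∈ L¹` is dominated by some `g ∈ L¹` lying in the polar of the convex cone
`C ⊆ L∞` (with `C ∩ L∞₊ = {0}`), then there is an `N`-function `φ` such that `f` is
bounded above on `C_φ = {x ∈ C : ‖x⁻‖_φ ≤ 1}`. -/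
theorem exists_Nfunction_bddAbove
    {Ω : Type*} [MeasurableSpace Ω] (P : Measure Ω) [IsProbabilityMeasure P]
    (C : Set (Lp ℝ ⊤ P))
    (hCcone : ∀ x ∈ C, ∀ c : ℝ, 0 ≤ c → c • x ∈ C)
    (hCconvex : Convex ℝ C)
    (hNA : ∀ x ∈ C, 0 ≤ x → x = 0)
    (f : Ω → ℝ) (hfint : Integrable f P)
    (h : ∃ g : Ω → ℝ, Integrable g P ∧ (∀ᵐ ω ∂P, f ω ≤ g ω) ∧
      ∀ x ∈ C, ∫ ω, (x : Ω → ℝ) ω * g ω ∂P ≤ 0) :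
    ∃ φ : ℝ → ℝ,
      ConvexOn ℝ (Ici (0 : ℝ)) φ ∧
      (∀ t ∈ Ici (0 : ℝ), 0 ≤ φ t) ∧
      Tendsto (fun t => φ t / t) (nhdsWithin 0 (Ioi 0)) (nhds 0) ∧
      Tendsto (fun t => φ t / t) atTop atTop ∧
      BddAbove {r : ℝ | ∃ x ∈ C,
        luxemburgNorm P φ (fun ω => max (-(x : Ω → ℝ) ω) 0) ≤ 1 ∧
        r = ∫ ω, (x : Ω → ℝ) ω * f ω ∂P} := by
  obtain ⟨g, hg_int, hfg, hpolar⟩ := h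
  -- the dominating "residual" function
  set d : Ω → ℝ := fun ω => max (g ω - f ω) 0 with hd_def
  have hd_int : Integrable d P := (hg_int.sub hfint).pos_part
  have hd_nonneg : ∀ ω, 0 ≤ d ω := fun ω => le_max_right _ _
  have hd_meas : AEStronglyMeasurable d P := hd_int.aestronglyMeasurable
  -- choose the truncation levels
  have key : ∀ k : ℕ, ∃ m : ℕ, (k : ℝ) ≤ (m : ℝ) ∧
      ∫ ω, max (d ω - (m : ℝ)) 0 ∂P ≤ (1/2 : ℝ) ^ k := by
    have T : Tendsto (fun m : ℕ => ∫ ω, max (d ω - (m : ℝ)) 0 ∂P) atTop (nhds 0) := by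
      have := tendsto_integral_of_dominated_convergence (μ := P)
        (F := fun (m : ℕ) (ω : Ω) => max (d ω - (m : ℝ)) 0) (f := fun _ => (0:ℝ))
        (bound := d)
        (fun m => (hd_meas.sub aestronglyMeasurable_const).sup aestronglyMeasurable_const)
        hd_int
        (fun m => Eventually.of_forall fun ω => by
          rw [Real.norm_eq_abs, abs_of_nonneg (le_max_right _ _)]
          exact max_le (by linarith [hd_nonneg ω, Nat.cast_nonneg (α := ℝ) m]) (hd_nonneg ω))
        (Eventually.of_forall fun ω => by
          apply tendsto_atTop_of_eventually_const (i₀ := ⌈d ω⌉₊)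
          intro m hm
          have : d ω ≤ (m : ℝ) := le_trans (Nat.le_ceil _) (by exact_mod_cast hm)
          simp [max_eq_right, sub_nonpos.2 this])
      simpa using this
    intro k
    have hpos : (0:ℝ) < (1/2) ^ k := by positivity
    obtain ⟨m, hm1, hm2⟩ := ((eventually_ge_atTop k).and
      (T.eventually (gt_mem_nhds hpos))).exists
    exact ⟨m, by exact_mod_cast hm1, le_of_lt hm2⟩
  choose m hm1 hm2 using key
  set n : ℕ → ℝ := fun k => (m k : ℝ) with hn_def
  have hn : ∀ k : ℕ, (k : ℝ) ≤ n k := hm1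
  refine ⟨phiAux n, phiAux_convexOn n hn, fun t _ => phiAux_nonneg n t, ?_, ?_, ?_⟩
  · -- φ(t)/t → 0 as t → 0⁺
    apply tendsto_of_tendsto_of_tendsto_of_le_of_le'
      (g := fun _ => (0:ℝ)) (h := fun t => t / 2) tendsto_const_nhds
    · have : Tendsto (fun t : ℝ => t / 2) (nhds 0) (nhds 0) := by
        simpa using (continuous_id.div_const 2).tendsto (0:ℝ)
      exact this.mono_left nhdsWithin_le_nhds
    · filter_upwards [self_mem_nhdsWithin] with t ht
      exact div_nonneg (phiAux_nonneg n t) (le_of_lt ht)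
    · filter_upwards [self_mem_nhdsWithin,
        eventually_nhdsWithin_of_eventually_nhds (eventually_lt_nhds (by norm_num : (0:ℝ) < 1/4))]
        with t ht ht4
      have h1 : phiAux n t ≤ t ^ 2 / 2 := phiAux_le_small n hn t (le_of_lt ht) (le_of_lt ht4)
      rw [div_le_div_iff₀ ht (by norm_num : (0:ℝ) < 2)]
      nlinarith
  · -- φ(t)/t → ∞ as t → ∞
    apply tendsto_atTop_mono' _ _ (tendsto_id.atTop_div_const (by norm_num : (0:ℝ) < 2))
    filter_upwards [eventually_gt_atTop (0:ℝ)] with t ht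
    have h1 : t ^ 2 / 2 ≤ phiAux n t := phiAux_quad_lb n t ht.le
    rw [le_div_iff₀ ht]
    simp only [id_eq]
    nlinarith
  · -- boundedness
    refine ⟨1 + ∫ ω, psiAux n (d ω) ∂P, ?_⟩
    rintro r ⟨x, hxC, hlux, rfl⟩
    set u : Ω → ℝ := fun ω => max (-(x : Ω → ℝ) ω) 0 with hu_def
    have hu_nonneg : ∀ ω, 0 ≤ u ω := fun ω => le_max_right _ _
    have hx_meas : AEStronglyMeasurable (x : Ω → ℝ) P := Lp.aestronglyMeasurable x
    have hu_meas : AEStronglyMeasurable u P := hx_meas.neg.sup aestronglyMeasurable_const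
    -- a.e. bound on x
    set M : ℝ := (eLpNormEssSup (x : Ω → ℝ) P).toReal with hM_def
    have hMtop : eLpNormEssSup (x : Ω → ℝ) P ≠ ⊤ := by
      have := Lp.eLpNorm_lt_top x
      rwa [eLpNorm_exponent_top, lt_top_iff_ne_top] at this
    have hbound : ∀ᵐ ω ∂P, ‖(x : Ω → ℝ) ω‖ ≤ M := by
      filter_upwards [ae_le_eLpNormEssSup (f := (x : Ω → ℝ)) (μ := P)] with ω hω
      have h2 := ENNReal.toReal_mono hMtop hω
      simpa using h2
    have hM0 : 0 ≤ M := ENNReal.toReal_nonneg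
    have hu_le : ∀ᵐ ω ∂P, u ω ≤ M := by
      filter_upwards [hbound] with ω hω
      exact max_le (by rw [Real.norm_eq_abs] at hω; cases abs_cases ((x : Ω → ℝ) ω) <;> linarith)
        hM0
    -- integrabilities
    have hxf : Integrable (fun ω => (x : Ω → ℝ) ω * f ω) P :=
      hfint.bdd_mul hx_meas hbound
    have hxg : Integrable (fun ω => (x : Ω → ℝ) ω * g ω) P :=
      hg_int.bdd_mul hx_meas hbound
    have hphiu_meas : AEStronglyMeasurable (fun ω => phiAux n (u ω)) P :=
      ((phiAux_measurable n hn).comp_aemeasurable hu_meas.aemeasurable).aestronglyMeasurable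
    have hphiu : Integrable (fun ω => phiAux n (u ω)) P := by
      refine Integrable.mono' (integrable_const (phiAux n M)) hphiu_meas ?_
      filter_upwards [hu_le] with ω hω
      rw [Real.norm_eq_abs, abs_of_nonneg (phiAux_nonneg n _)]
      exact phiAux_mono n hn hω
    have hpsid_meas : AEStronglyMeasurable (fun ω => psiAux n (d ω)) P :=
      ((psiAux_mono n hn).measurable.comp_aemeasurable hd_meas.aemeasurable).aestronglyMeasurable
    have hpsid : Integrable (fun ω => psiAux n (d ω)) P := by
      have hterm_int : ∀ k : ℕ, Integrable (fun ω => max (d ω - n k) 0) P :=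
        fun k => (hd_int.sub (integrable_const _)).pos_part
      have hterm_meas : ∀ k : ℕ, AEMeasurable (fun ω => ENNReal.ofReal (max (d ω - n k) 0)) P :=
        fun k => ((hd_meas.aemeasurable.sub aemeasurable_const).max
          aemeasurable_const).ennreal_ofReal
      refine ⟨hpsid_meas, ?_⟩
      rw [hasFiniteIntegral_iff_ofReal (Eventually.of_forall fun ω => psiAux_nonneg n (d ω))]
      have hpt : ∀ ω, ENNReal.ofReal (psiAux n (d ω)) ≤
          ENNReal.ofReal (d ω) + ∑' k, ENNReal.ofReal (max (d ω - n k) 0) := by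
        intro ω
        have h1 : psiAux n (d ω) ≤ d ω + ∑' k, max (d ω - n k) 0 := by
          unfold psiAux
          rw [max_eq_left (hd_nonneg ω)]
          have h2 : d ω ^ 2 / (1 + d ω) ≤ d ω := by
            rw [div_le_iff₀ (by nlinarith [hd_nonneg ω])]
            nlinarith [hd_nonneg ω]
          linarith
        calc ENNReal.ofReal (psiAux n (d ω))
            ≤ ENNReal.ofReal (d ω + ∑' k, max (d ω - n k) 0) := ENNReal.ofReal_le_ofReal h1
          _ ≤ ENNReal.ofReal (d ω) + ENNReal.ofReal (∑' k, max (d ω - n k) 0) :=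
              ENNReal.ofReal_add_le
          _ = _ := by
              rw [ENNReal.ofReal_tsum_of_nonneg (fun k => le_max_right _ _)
                (summable_psiTerm n hn (d ω))]
      have hfin1 : ∫⁻ ω, ENNReal.ofReal (d ω) ∂P < ⊤ := by
        have h3 := hd_int.2
        rwa [hasFiniteIntegral_iff_ofReal (Eventually.of_forall hd_nonneg)] at h3
      have hfin2 : ∫⁻ ω, ∑' k, ENNReal.ofReal (max (d ω - n k) 0) ∂P < ⊤ := by
        rw [lintegral_tsum hterm_meas]
        have hle : ∀ k : ℕ, ∫⁻ ω, ENNReal.ofReal (max (d ω - n k) 0) ∂P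
            ≤ ENNReal.ofReal ((1/2 : ℝ) ^ k) := by
          intro k
          rw [← ofReal_integral_eq_lintegral_ofReal (hterm_int k)
            (Eventually.of_forall fun ω => le_max_right _ _)]
          exact ENNReal.ofReal_le_ofReal (hm2 k)
        calc ∑' k, ∫⁻ ω, ENNReal.ofReal (max (d ω - n k) 0) ∂P
            ≤ ∑' k : ℕ, ENNReal.ofReal ((1/2 : ℝ) ^ k) := ENNReal.tsum_le_tsum hle
          _ = ENNReal.ofReal (∑' k : ℕ, (1/2 : ℝ) ^ k) := by
              rw [ENNReal.ofReal_tsum_of_nonneg (fun k => by positivity)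
                (summable_geometric_of_lt_one (by norm_num) (by norm_num))]
          _ < ⊤ := ENNReal.ofReal_lt_top
      calc ∫⁻ ω, ENNReal.ofReal (psiAux n (d ω)) ∂P
          ≤ ∫⁻ ω, (ENNReal.ofReal (d ω) + ∑' k, ENNReal.ofReal (max (d ω - n k) 0)) ∂P :=
            lintegral_mono hpt
        _ = (∫⁻ ω, ENNReal.ofReal (d ω) ∂P)
            + ∫⁻ ω, ∑' k, ENNReal.ofReal (max (d ω - n k) 0) ∂P :=
            lintegral_add_left' hd_meas.aemeasurable.ennreal_ofReal _
        _ < ⊤ := ENNReal.add_lt_top.2 ⟨hfin1, hfin2⟩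
    have hud : Integrable (fun ω => u ω * d ω) P := by
      refine Integrable.mono' (hphiu.add hpsid) (hu_meas.mul hd_meas) ?_
      apply Eventually.of_forall
      intro ω
      rw [Real.norm_eq_abs, abs_of_nonneg (mul_nonneg (hu_nonneg ω) (hd_nonneg ω))]
      exact phiAux_young n hn _ _ (hu_nonneg ω) (hd_nonneg ω)
    -- step 1 : ∫ x f ≤ ∫ u d
    have step1 : ∫ ω, (x : Ω → ℝ) ω * f ω ∂P ≤ ∫ ω, u ω * d ω ∂P := by
      have hae : ∀ᵐ ω ∂P, (x : Ω → ℝ) ω * f ω ≤ (x : Ω → ℝ) ω * g ω + u ω * d ω := by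
        filter_upwards [hfg] with ω hω
        have h1 : -((x : Ω → ℝ) ω) ≤ u ω := le_max_left _ _
        have h2 : d ω = g ω - f ω := max_eq_left (by linarith)
        rw [h2]
        nlinarith [mul_le_mul_of_nonneg_right h1 (sub_nonneg.2 hω)]
      calc ∫ ω, (x : Ω → ℝ) ω * f ω ∂P
          ≤ ∫ ω, ((x : Ω → ℝ) ω * g ω + u ω * d ω) ∂P := integral_mono_ae hxf (hxg.add hud) hae
        _ = (∫ ω, (x : Ω → ℝ) ω * g ω ∂P) + ∫ ω, u ω * d ω ∂P := integral_add hxg hud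
        _ ≤ ∫ ω, u ω * d ω ∂P := by linarith [hpolar x hxC]
    -- step 2 : Young
    have step2 : ∫ ω, u ω * d ω ∂P ≤ (∫ ω, phiAux n (u ω) ∂P) + ∫ ω, psiAux n (d ω) ∂P := by
      rw [← integral_add hphiu hpsid]
      refine integral_mono_ae hud (hphiu.add hpsid) (Eventually.of_forall fun ω => ?_)
      exact phiAux_young n hn _ _ (hu_nonneg ω) (hd_nonneg ω)
    -- step 3 : modular bound from the Luxemburg norm bound
    have step3 : ∫ ω, phiAux n (u ω) ∂P ≤ 1 := by
      have habs : ∀ ω, |u ω| = u ω := fun ω => abs_of_nonneg (hu_nonneg ω)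
      unfold luxemburgNorm at hlux
      set S : Set ℝ :=
        {lam : ℝ | 0 < lam ∧ ∫⁻ ω, ENNReal.ofReal (phiAux n (|u ω| / lam)) ∂P ≤ 1} with hS_def
      have hS_ne : S.Nonempty := by
        refine ⟨8 * (M + 1), by linarith, ?_⟩
        have hptw : ∀ᵐ ω ∂P, ENNReal.ofReal (phiAux n (|u ω| / (8 * (M + 1)))) ≤ 1 := by
          filter_upwards [hu_le] with ω hω
          have h8 : (0:ℝ) < 8 * (M + 1) := by linarith
          have h1 : 0 ≤ u ω / (8 * (M + 1)) := div_nonneg (hu_nonneg ω) h8.le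
          have h2 : u ω / (8 * (M + 1)) ≤ 1/4 := by
            rw [div_le_iff₀ h8]
            nlinarith [hu_nonneg ω]
          have h3 : phiAux n (|u ω| / (8 * (M + 1))) ≤ 1 := by
            rw [habs ω]
            refine le_trans (phiAux_le_small n hn _ h1 h2) ?_
            nlinarith [hu_nonneg ω, div_nonneg (hu_nonneg ω) h8.le]
          calc ENNReal.ofReal (phiAux n (|u ω| / (8 * (M + 1))))
              ≤ ENNReal.ofReal 1 := ENNReal.ofReal_le_ofReal h3
            _ = 1 := ENNReal.ofReal_one
        calc ∫⁻ ω, ENNReal.ofReal (phiAux n (|u ω| / (8 * (M + 1)))) ∂P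
            ≤ ∫⁻ _, 1 ∂P := lintegral_mono_ae hptw
          _ = 1 := by simp
      have hS_bdd : BddBelow S := ⟨0, fun lam hlam => hlam.1.le⟩
      have hmem : ∀ lam : ℝ, 1 < lam →
          ∫⁻ ω, ENNReal.ofReal (phiAux n (u ω / lam)) ∂P ≤ 1 := by
        intro lam hlam
        obtain ⟨μ, hμS, hμlt⟩ := (csInf_lt_iff hS_bdd hS_ne).1 (lt_of_le_of_lt hlux hlam)
        refine le_trans (lintegral_mono fun ω => ?_) hμS.2
        apply ENNReal.ofReal_le_ofReal
        rw [habs ω]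
        exact phiAux_mono n hn (div_le_div_of_nonneg_left (hu_nonneg ω) hμS.1 hμlt.le)
      have hmodular : ∫⁻ ω, ENNReal.ofReal (phiAux n (u ω)) ∂P ≤ 1 := by
        have hlampos : ∀ mm : ℕ, (0:ℝ) < 1 + ((mm:ℝ) + 1)⁻¹ := fun mm => by positivity
        have hmono_seq : ∀ ω, Monotone fun mm : ℕ =>
            ENNReal.ofReal (phiAux n (u ω / (1 + ((mm:ℝ) + 1)⁻¹))) := by
          intro ω mm mm' hmm
          apply ENNReal.ofReal_le_ofReal
          apply phiAux_mono n hn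
          apply div_le_div_of_nonneg_left (hu_nonneg ω) (hlampos mm')
          have h4 : ((mm':ℝ) + 1)⁻¹ ≤ ((mm:ℝ) + 1)⁻¹ := by
            apply inv_anti₀ (by positivity)
            have : (mm:ℝ) ≤ (mm':ℝ) := Nat.cast_le.2 hmm
            linarith
          linarith
        have haemeas : ∀ mm : ℕ, AEMeasurable
            (fun ω => ENNReal.ofReal (phiAux n (u ω / (1 + ((mm:ℝ) + 1)⁻¹)))) P := by
          intro mm
          exact ((phiAux_measurable n hn).comp_aemeasurable
            (hu_meas.aemeasurable.div_const _)).ennreal_ofReal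
        calc ∫⁻ ω, ENNReal.ofReal (phiAux n (u ω)) ∂P
            ≤ ∫⁻ ω, ⨆ mm : ℕ, ENNReal.ofReal (phiAux n (u ω / (1 + ((mm:ℝ) + 1)⁻¹))) ∂P := by
              apply lintegral_mono
              intro ω
              have hbddr : BddAbove (range fun mm : ℕ => phiAux n (u ω / (1 + ((mm:ℝ) + 1)⁻¹))) := by
                refine ⟨phiAux n (u ω), ?_⟩
                rintro y ⟨mm, rfl⟩
                exact phiAux_mono n hn (div_le_self (hu_nonneg ω) (by
                  have : (0:ℝ) < ((mm:ℝ) + 1)⁻¹ := by positivity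
                  linarith))
              calc ENNReal.ofReal (phiAux n (u ω))
                  ≤ ENNReal.ofReal (⨆ mm : ℕ, phiAux n (u ω / (1 + ((mm:ℝ) + 1)⁻¹))) :=
                    ENNReal.ofReal_le_ofReal (phiAux_le_iSup n hn (u ω) (hu_nonneg ω))
                _ = ⨆ mm : ℕ, ENNReal.ofReal (phiAux n (u ω / (1 + ((mm:ℝ) + 1)⁻¹))) :=
                    Monotone.map_ciSup_of_continuousAt
                      (ENNReal.continuous_ofReal.continuousAt)
                      (fun a b hab => ENNReal.ofReal_le_ofReal hab) hbddr
          _ = ⨆ mm : ℕ, ∫⁻ ω, ENNReal.ofReal (phiAux n (u ω / (1 + ((mm:ℝ) + 1)⁻¹))) ∂P :=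
              lintegral_iSup' haemeas (Eventually.of_forall hmono_seq)
          _ ≤ 1 := iSup_le fun mm => hmem _ (by
              have : (0:ℝ) < ((mm:ℝ) + 1)⁻¹ := by positivity
              linarith)
      rw [integral_eq_lintegral_of_nonneg_ae (Eventually.of_forall fun ω => phiAux_nonneg n (u ω))
        hphiu_meas]
      have h5 := ENNReal.toReal_mono (by norm_num : (1:ENNReal) ≠ ⊤) hmodular
      simpa using h5
    linarith
end

section
/- Let $X$ be a Banach lattice with dual $X^*$, $C \subseteq X$ a convex cone with $C \cap X_+ = \{0\}$, and $f \in X^*$. Then the following are equivalent: (i) $\sup\{\langle x, f\rangle : x \in C, \|x^-\| \le 1\} < \infty$; (ii) there exists $g \in X^*$ with $g \ge f$ and $\langle x, g\rangle \le 0$ for all $x \in C$. -/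
private lemma bl_smul_nonneg {X : Type*} [NormedAddCommGroup X] [Lattice X] [HasSolidNorm X] [IsOrderedAddMonoid X] [NormedSpace ℝ X]
    {r : ℝ} (hr : 0 ≤ r) {x : X} (hx : 0 ≤ x) : 0 ≤ r • x := by
  have hdy : ∀ k : ℕ, 0 ≤ (((2:ℝ)^k)⁻¹) • x := by
    intro k
    induction k with
    | zero => simpa using hx
    | succ k ih =>
      apply nsmul_two_semiclosed
      have h2 : (2:ℕ) • ((((2:ℝ)^(k+1))⁻¹) • x) = (((2:ℝ)^k)⁻¹) • x := by
        rw [← Nat.cast_smul_eq_nsmul ℝ, smul_smul]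
        congr 1
        rw [pow_succ]
        push_cast
        field_simp
      rw [h2]; exact ih
  have hmd : ∀ (m k : ℕ), 0 ≤ ((m:ℝ) / 2^k) • x := by
    intro m k
    have h1 : ((m:ℝ) / 2^k) • x = m • ((((2:ℝ)^k)⁻¹) • x) := by
      rw [← Nat.cast_smul_eq_nsmul ℝ, smul_smul, div_eq_mul_inv]
    rw [h1]
    exact nsmul_nonneg (hdy k) m
  set d : ℕ → ℝ := fun n => (Nat.ceil (r * 2^n) : ℝ) / 2^n with hd
  have hge : ∀ n, r ≤ d n := by
    intro n
    rw [hd]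
    rw [le_div_iff₀ (by positivity)]
    exact Nat.le_ceil _
  have hle : ∀ n, d n ≤ r + (1/2)^n := by
    intro n
    have h21 : ((1:ℝ)/2)^n * 2^n = 1 := by
      rw [← mul_pow]; norm_num
    rw [hd, div_le_iff₀ (by positivity)]
    have := (Nat.ceil_lt_add_one (a := r * 2^n) (by positivity)).le
    calc (Nat.ceil (r * 2^n) : ℝ) ≤ r * 2^n + 1 := this
      _ = (r + (1/2)^n) * 2^n := by rw [add_mul, h21]
  have htend : Filter.Tendsto d Filter.atTop (nhds r) := by
    have h2 : Filter.Tendsto (fun n : ℕ => r + (1/2:ℝ)^n) Filter.atTop (nhds (r + 0)) :=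
      Filter.Tendsto.add tendsto_const_nhds
        (tendsto_pow_atTop_nhds_zero_of_lt_one (by norm_num) (by norm_num))
    rw [add_zero] at h2
    exact tendsto_of_tendsto_of_tendsto_of_le_of_le tendsto_const_nhds h2 hge hle
  have hx' : Filter.Tendsto (fun n => d n • x) Filter.atTop (nhds (r • x)) :=
    htend.smul_const x
  exact le_of_tendsto_of_tendsto' tendsto_const_nhds hx' (fun n => hmd _ n)

private lemma bl_smul_mono {X : Type*} [NormedAddCommGroup X] [Lattice X] [HasSolidNorm X] [IsOrderedAddMonoid X] [NormedSpace ℝ X]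
    {r : ℝ} (hr : 0 ≤ r) {a b : X} (hab : a ≤ b) : r • a ≤ r • b := by
  have := bl_smul_nonneg hr (sub_nonneg.2 hab)
  rw [smul_sub, sub_nonneg] at this
  exact this

private lemma bl_smul_negPart {X : Type*} [NormedAddCommGroup X] [Lattice X] [HasSolidNorm X] [IsOrderedAddMonoid X] [NormedSpace ℝ X]
    {r : ℝ} (hr : 0 ≤ r) (x : X) : (r • x)⁻ = r • x⁻ := by
  rcases hr.eq_or_lt with h | h
  · simp [← h]
  have hsup : ∀ a b : X, r • (a ⊔ b) = (r • a) ⊔ (r • b) := by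
    intro a b
    apply le_antisymm
    · have h1 : a ⊔ b ≤ r⁻¹ • ((r • a) ⊔ (r • b)) := by
        apply sup_le
        · have := bl_smul_mono (inv_nonneg.2 h.le) (le_sup_left (a := r • a) (b := r • b))
          rwa [inv_smul_smul₀ h.ne'] at this
        · have := bl_smul_mono (inv_nonneg.2 h.le) (le_sup_right (a := r • a) (b := r • b))
          rwa [inv_smul_smul₀ h.ne'] at this
      have := bl_smul_mono h.le h1
      rwa [smul_inv_smul₀ h.ne'] at this
    · exact sup_le (bl_smul_mono h.le le_sup_left) (bl_smul_mono h.le le_sup_right)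
  rw [negPart_def, negPart_def, hsup, smul_zero, smul_neg]
/-- Theorem 1 for Banach lattices: for a convex cone `C` with `C ∩ X₊ = {0}` and
`f ∈ X*`, boundedness of `f` on `C₁ = {x ∈ C : ‖x⁻‖ ≤ 1}` is equivalent to the
existence of `g ∈ C°` with `g ≥ f`. -/
theorem banach_lattice_main
    {X : Type*} [NormedAddCommGroup X] [Lattice X] [HasSolidNorm X] [IsOrderedAddMonoid X] [NormedSpace ℝ X] [CompleteSpace X]
    (C : Set X)
    (hCcone : ∀ x ∈ C, ∀ c : ℝ, 0 ≤ c → c • x ∈ C)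
    (hCconvex : Convex ℝ C)
    (hNA : ∀ x ∈ C, 0 ≤ x → x = 0)
    (f : X →L[ℝ] ℝ) :
    BddAbove {r : ℝ | ∃ x ∈ C, ‖x⁻‖ ≤ 1 ∧ r = f x} ↔
      ∃ g : X →L[ℝ] ℝ, (∀ x : X, 0 ≤ x → f x ≤ g x) ∧ ∀ x ∈ C, g x ≤ 0 := by
  rcases C.eq_empty_or_nonempty with hCe | ⟨x₀, hx₀⟩
  · subst hCe
    constructor
    · intro _
      exact ⟨f, fun x _ => le_rfl, fun x hx => absurd hx (Set.notMem_empty x)⟩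
    · intro _
      refine ⟨0, ?_⟩
      rintro r ⟨x, hx, -⟩
      exact absurd hx (Set.notMem_empty x)
  have h0C : (0 : X) ∈ C := by
    have := hCcone x₀ hx₀ 0 le_rfl
    simpa using this
  constructor
  · rintro ⟨M, hM⟩
    rw [mem_upperBounds] at hM
    have hM0 : 0 ≤ M := hM 0 ⟨0, h0C, by simp, by simp⟩
    -- key homogeneous bound on C
    have hfC : ∀ c ∈ C, f c ≤ M * ‖c⁻‖ := by
      intro c hc
      by_cases hcn : c⁻ = 0
      · have hc0 : c = 0 := hNA c hc (negPart_eq_zero.1 hcn)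
        simp [hc0]
      · have ht : (0:ℝ) < ‖c⁻‖ := norm_pos_iff.2 hcn
        have hmem : f (‖c⁻‖⁻¹ • c) ≤ M := by
          apply hM
          refine ⟨‖c⁻‖⁻¹ • c, hCcone c hc _ (inv_nonneg.2 ht.le), ?_, rfl⟩
          rw [bl_smul_negPart (inv_nonneg.2 ht.le), norm_smul]
          simp [abs_of_nonneg (inv_nonneg.2 ht.le), inv_mul_cancel₀ ht.ne']
        rw [map_smul, smul_eq_mul] at hmem
        calc f c = ‖c⁻‖ * (‖c⁻‖⁻¹ * f c) := by field_simp
          _ ≤ ‖c⁻‖ * M := mul_le_mul_of_nonneg_left hmem ht.le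
          _ = M * ‖c⁻‖ := mul_comm _ _
    set K : ℝ := M + ‖f‖ with hKdef
    have hK0 : 0 ≤ K := add_nonneg hM0 (norm_nonneg f)
    -- addition in C
    have hCadd : ∀ a ∈ C, ∀ b ∈ C, a + b ∈ C := by
      intro a ha b hb
      have hmid : (1/2 : ℝ) • a + (1/2 : ℝ) • b ∈ C :=
        hCconvex ha hb (by norm_num) (by norm_num) (by norm_num)
      have := hCcone _ hmid 2 (by norm_num)
      rwa [smul_add, smul_smul, smul_smul, show (2:ℝ) * (1/2) = 1 by norm_num, one_smul,
        one_smul] at this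
    set T : X → Set ℝ := fun z =>
      {t | ∃ c ∈ C, ∃ y : X, 0 ≤ y ∧ ∃ w : X, z = c - y + w ∧ K * ‖w‖ - f y ≤ t} with hT
    have hTne : ∀ z : X, K * ‖z‖ ∈ T z := by
      intro z
      exact ⟨0, h0C, 0, le_rfl, z, by simp, by simp⟩
    have hTlb : ∀ z : X, ∀ t ∈ T z, f z - M * ‖z⁻‖ ≤ t := by
      rintro z t ⟨c, hc, y, hy, w, hzw, hle⟩
      have hcz : c = z + y - w := by rw [hzw]; abel
      have h1 : c⁻ ≤ z⁻ + w⁺ := by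
        rw [hcz, negPart_def]
        apply sup_le
        · have he : -(z + y - w) = -z + -y + w := by abel
          rw [he]
          calc -z + -y + w ≤ z⁻ + 0 + w⁺ :=
                add_le_add (add_le_add (neg_le_negPart z) (neg_nonpos.2 hy)) (le_posPart w)
            _ = z⁻ + w⁺ := by rw [add_zero]
        · exact add_nonneg (negPart_nonneg z) (posPart_nonneg w)
      have hn1 : ‖c⁻‖ ≤ ‖z⁻‖ + ‖w‖ := by
        have ha : ‖c⁻‖ ≤ ‖z⁻ + w⁺‖ := by
          apply norm_le_norm_of_abs_le_abs
          rw [abs_of_nonneg (negPart_nonneg c),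
            abs_of_nonneg (add_nonneg (negPart_nonneg z) (posPart_nonneg w))]
          exact h1
        have hb : ‖w⁺‖ ≤ ‖w‖ := by
          apply norm_le_norm_of_abs_le_abs
          rw [abs_of_nonneg (posPart_nonneg w)]
          rw [← posPart_add_negPart w]
          exact le_add_of_nonneg_right (negPart_nonneg w)
        calc ‖c⁻‖ ≤ ‖z⁻ + w⁺‖ := ha
          _ ≤ ‖z⁻‖ + ‖w⁺‖ := norm_add_le _ _
          _ ≤ ‖z⁻‖ + ‖w‖ := by linarith
      have hyy : y = c + w - z := by rw [hcz]; abel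
      have hfy : f y = f c + f w - f z := by rw [hyy]; simp
      have hfc : f c ≤ M * (‖z⁻‖ + ‖w‖) :=
        (hfC c hc).trans (mul_le_mul_of_nonneg_left hn1 hM0)
      have hfw : f w ≤ ‖f‖ * ‖w‖ := (le_abs_self _).trans (f.le_opNorm w)
      have := hle
      rw [hfy] at this
      rw [hKdef] at this
      nlinarith [norm_nonneg w]
    set N : X → ℝ := fun z => sInf (T z) with hN
    have hbdd : ∀ z : X, BddBelow (T z) := fun z => ⟨f z - M * ‖z⁻‖, hTlb z⟩
    have hNle : ∀ z : X, ∀ t ∈ T z, N z ≤ t := fun z t ht => csInf_le (hbdd z) ht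
    have hNge : ∀ z : X, f z - M * ‖z⁻‖ ≤ N z := fun z => le_csInf ⟨_, hTne z⟩ (hTlb z)
    -- homogeneity
    have hmemS : ∀ (r : ℝ), 0 < r → ∀ z : X, ∀ t ∈ T z, r * t ∈ T (r • z) := by
      rintro r hr z t ⟨c, hc, y, hy, w, hzw, hle⟩
      refine ⟨r • c, hCcone c hc r hr.le, r • y, bl_smul_nonneg hr.le hy, r • w, ?_, ?_⟩
      · rw [hzw, smul_add, smul_sub]
      · rw [norm_smul, map_smul, smul_eq_mul, Real.norm_eq_abs, abs_of_pos hr]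
        calc K * (r * ‖w‖) - r * f y = r * (K * ‖w‖ - f y) := by ring
          _ ≤ r * t := mul_le_mul_of_nonneg_left hle hr.le
    have haux : ∀ (r : ℝ), 0 < r → ∀ z : X, N (r • z) ≤ r * N z := by
      intro r hr z
      have hdiv : N (r • z) / r ≤ N z := by
        apply le_csInf ⟨_, hTne z⟩
        intro t ht
        rw [div_le_iff₀ hr, mul_comm]
        exact hNle _ _ (hmemS r hr z t ht)
      calc N (r • z) = r * (N (r • z) / r) := by field_simp
        _ ≤ r * N z := mul_le_mul_of_nonneg_left hdiv hr.le
    have N_hom : ∀ (r : ℝ), 0 < r → ∀ z : X, N (r • z) = r * N z := by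
      intro r hr z
      refine le_antisymm (haux r hr z) ?_
      have := haux r⁻¹ (inv_pos.2 hr) (r • z)
      rw [inv_smul_smul₀ hr.ne'] at this
      calc r * N z ≤ r * (r⁻¹ * N (r • z)) := mul_le_mul_of_nonneg_left this hr.le
        _ = N (r • z) := by field_simp
    -- subadditivity
    have N_add : ∀ z₁ z₂ : X, N (z₁ + z₂) ≤ N z₁ + N z₂ := by
      intro z₁ z₂
      have key : ∀ t₁ ∈ T z₁, ∀ t₂ ∈ T z₂, N (z₁ + z₂) ≤ t₁ + t₂ := by
        rintro t₁ ⟨c₁, hc₁, y₁, hy₁, w₁, hzw₁, hle₁⟩ t₂ ⟨c₂, hc₂, y₂, hy₂, w₂, hzw₂, hle₂⟩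
        apply hNle
        refine ⟨c₁ + c₂, hCadd _ hc₁ _ hc₂, y₁ + y₂, add_nonneg hy₁ hy₂, w₁ + w₂, ?_, ?_⟩
        · rw [hzw₁, hzw₂]; abel
        · have hn : ‖w₁ + w₂‖ ≤ ‖w₁‖ + ‖w₂‖ := norm_add_le _ _
          have := mul_le_mul_of_nonneg_left hn hK0
          rw [map_add]
          linarith
      have h1 : ∀ t₁ ∈ T z₁, N (z₁ + z₂) - t₁ ≤ N z₂ := by
        intro t₁ ht₁
        apply le_csInf ⟨_, hTne z₂⟩
        intro t₂ ht₂
        linarith [key t₁ ht₁ t₂ ht₂]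
      have h2 : N (z₁ + z₂) - N z₂ ≤ N z₁ := by
        apply le_csInf ⟨_, hTne z₁⟩
        intro t₁ ht₁
        linarith [h1 t₁ ht₁]
      linarith
    -- Hahn-Banach
    obtain ⟨g, -, hgN⟩ :=
      exists_extension_of_le_sublinear ((0 : X →ₗ[ℝ] ℝ).toPMap ⊥) N N_hom N_add
        (by
          rintro ⟨x, hx⟩
          have hx0 : x = 0 := by simpa using hx
          subst hx0
          have h0 : (0:ℝ) ≤ N 0 := by simpa using hNge 0
          simpa [LinearMap.toPMap_apply] using h0)
    have hgK : ∀ z : X, g z ≤ K * ‖z‖ := fun z => (hgN z).trans (hNle z _ (hTne z))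
    have hgabs : ∀ z : X, |g z| ≤ K * ‖z‖ := by
      intro z
      rw [abs_le]
      constructor
      · have := hgK (-z)
        rw [map_neg, norm_neg] at this
        linarith
      · exact hgK z
    refine ⟨g.mkContinuous K (fun z => by rw [Real.norm_eq_abs]; exact hgabs z), ?_, ?_⟩
    · intro x hx
      have hmem : -f x ∈ T (-x) := ⟨0, h0C, x, hx, 0, by simp, by simp⟩
      have := (hgN (-x)).trans (hNle _ _ hmem)
      rw [map_neg] at this
      simpa [LinearMap.mkContinuous_apply] using by linarith
    · intro c hc
      have hmem : (0:ℝ) ∈ T c := ⟨c, hc, 0, le_rfl, 0, by simp, by simp⟩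
      have := (hgN c).trans (hNle _ _ hmem)
      simpa [LinearMap.mkContinuous_apply] using this
  · rintro ⟨g, hgf, hgC⟩
    refine ⟨‖g - f‖, ?_⟩
    rintro r ⟨x, hxC, hxn, rfl⟩
    have h1 : (g - f) x⁺ ≥ 0 := by
      have := hgf x⁺ (posPart_nonneg x)
      simp only [ContinuousLinearMap.sub_apply]
      linarith
    have h2 : (g - f) x⁻ ≤ ‖g - f‖ := by
      have := (le_abs_self _).trans ((g - f).le_opNorm x⁻)
      have h3 : ‖g - f‖ * ‖x⁻‖ ≤ ‖g - f‖ * 1 :=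
        mul_le_mul_of_nonneg_left hxn (norm_nonneg _)
      linarith
    have hx : x = x⁺ - x⁻ := (posPart_sub_negPart x).symm
    have hgx : g x ≤ 0 := hgC x hxC
    rw [ContinuousLinearMap.sub_apply] at h1 h2
    have hfx : f x = f x⁺ - f x⁻ := by
      conv_lhs => rw [hx]
      rw [map_sub]
    have hgx' : g x = g x⁺ - g x⁻ := by
      conv_lhs => rw [hx]
      rw [map_sub]
    linarith
end

section
/- Let $\mu$ be a finitely additive $\{0,1\}$-valued measure on the Lebesgue measurable subsets of $[0,1]$, vanishing on Lebesgue-null sets, such that $\mu(I) = 1$ for every open interval $I \subseteq (0,1)$ containing $1/2$. Define $C = \{x \in L^\infty[0,1] : \int x\, d\mathbf{P} + \int x \, d\mu \le 0\}$, where $\mathbf{P}$ is Lebesgue measure. Then for every $M > 0$ and every positive sequence $(\varepsilon_k)$, there exists $x \in C$ with $\mathbf{P}(x^- \ge k) \le \varepsilon_k$ for all $k \ge 1$ and $\int_0^1 x \, d\mathbf{P} > M$; in particular $f = 1$ is unbounded on $\bigcap_k \{x \in C : \mathbf{P}(x^- \ge k) \le \varepsilon_k\}$. -/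
open MeasureTheory Set

/-- Lebesgue measure on `[0,1]`. -/
noncomputable def PLeb : Measure ℝ := volume.restrict (Set.Icc (0 : ℝ) 1)

instance : IsProbabilityMeasure PLeb := by
  constructor
  simp [PLeb, Real.volume_Icc]

set_option maxHeartbeats 1000000 in
/-- Example 1: for the cone `C = {x ∈ L∞ : ∫ x dP + μ(x) ≤ 0}` built from a purely
finitely additive `0–1` measure `μ` concentrated near `1/2`, the functional `f = 1`
is unbounded on every set `⋂_k {x ∈ C : P(x⁻ ≥ k) ≤ ε_k}`. -/
theorem example1_unbounded
    (μ : (Lp ℝ ⊤ PLeb) →L[ℝ] ℝ)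
    (hμpos : ∀ x : Lp ℝ ⊤ PLeb, 0 ≤ x → 0 ≤ μ x)
    (hμ01 : ∀ (s : Set ℝ) (hs : MeasurableSet s),
      μ (indicatorConstLp ⊤ hs (measure_ne_top PLeb s) (1 : ℝ)) = 0 ∨
      μ (indicatorConstLp ⊤ hs (measure_ne_top PLeb s) (1 : ℝ)) = 1)
    (hμint : ∀ a b : ℝ, 0 ≤ a → b ≤ 1 → a < 1 / 2 → 1 / 2 < b →
      μ (indicatorConstLp ⊤ (measurableSet_Ioo : MeasurableSet (Set.Ioo a b))
          (measure_ne_top PLeb _) (1 : ℝ)) = 1)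
    (C : Set (Lp ℝ ⊤ PLeb))
    (hC : C = {x : Lp ℝ ⊤ PLeb | ∫ ω, (x : ℝ → ℝ) ω ∂PLeb + μ x ≤ 0})
    (M : ℝ) (hM : 0 < M) (ε : ℕ → ℝ) (hε : ∀ k ≥ 1, 0 < ε k) :
    ∃ x ∈ C,
      (∀ k : ℕ, 1 ≤ k →
        PLeb {ω | (k : ℝ) ≤ max (-(x : ℝ → ℝ) ω) 0} ≤ ENNReal.ofReal (ε k)) ∧
      M < ∫ ω, (x : ℝ → ℝ) ω ∂PLeb := by
  classical
  set n : ℝ := M + 1 with hn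
  have hn1 : (1 : ℝ) ≤ n := by simp [hn]; linarith
  have hnpos : (0 : ℝ) < n := by linarith
  set K : ℕ := ⌈n⌉₊ with hK
  have hK1 : 1 ≤ K := by
    rw [hK]
    exact Nat.one_le_ceil_iff.mpr hnpos
  have hne : (Finset.Icc 1 K).Nonempty := ⟨1, by simp [hK1]⟩
  set δ : ℝ := min ((Finset.Icc 1 K).inf' hne fun k => ε k / 2) (min (1 / (8 * n)) (1 / 4))
    with hδdef
  have hδpos : 0 < δ := by
    refine lt_min ?_ (lt_min (by positivity) (by norm_num))
    rw [Finset.lt_inf'_iff]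
    intro k hk
    have : 1 ≤ k := (Finset.mem_Icc.mp hk).1
    have := hε k this
    linarith
  have hδ4 : δ ≤ 1 / 4 := (min_le_right _ _).trans (min_le_right _ _)
  have hδ8 : δ ≤ 1 / (8 * n) := (min_le_right _ _).trans (min_le_left _ _)
  have hδε : ∀ k ∈ Finset.Icc 1 K, δ ≤ ε k / 2 := fun k hk =>
    (min_le_left _ _).trans (Finset.inf'_le _ hk)
  set I : Set ℝ := Set.Ioo (1 / 2 - δ) (1 / 2 + δ) with hIdef
  have hI : MeasurableSet I := measurableSet_Ioo
  -- measure of I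
  have hIsub : I ⊆ Set.Icc (0 : ℝ) 1 := by
    intro ω hω
    rcases hω with ⟨h1, h2⟩
    constructor <;> [linarith; linarith]
  have hPI : PLeb I = ENNReal.ofReal (2 * δ) := by
    rw [PLeb, Measure.restrict_apply hI, Set.inter_eq_self_of_subset_left hIsub,
      Real.volume_Ioo]
    ring_nf
  have hPIc : PLeb Iᶜ = ENNReal.ofReal (1 - 2 * δ) := by
    rw [prob_compl_eq_one_sub hI, hPI]
    rw [← ENNReal.ofReal_one, ← ENNReal.ofReal_sub _ (by linarith)]
  have hPIr : (PLeb I).toReal = 2 * δ := by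
    rw [hPI, ENNReal.toReal_ofReal (by linarith)]
  have hPIcr : (PLeb Iᶜ).toReal = 1 - 2 * δ := by
    rw [hPIc, ENNReal.toReal_ofReal (by linarith)]
  -- the Lp elements
  set e₁ : Lp ℝ ⊤ PLeb := indicatorConstLp ⊤ hI (measure_ne_top PLeb I) (1 : ℝ) with he₁
  set e₂ : Lp ℝ ⊤ PLeb := indicatorConstLp ⊤ hI.compl (measure_ne_top PLeb Iᶜ) (1 : ℝ) with he₂
  have hμe₁ : μ e₁ = 1 := hμint _ _ (by linarith) (by linarith) (by linarith) (by linarith)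
  have hμe₂ : μ e₂ = 0 := by
    rcases hμ01 Iᶜ hI.compl with h | h
    · exact h
    · exfalso
      set J : Set ℝ := Set.Ioo (1 / 2 - δ / 2) (1 / 2 + δ / 2) with hJdef
      have hJ : MeasurableSet J := measurableSet_Ioo
      have hμJ : μ (indicatorConstLp ⊤ hJ (measure_ne_top PLeb J) (1 : ℝ)) = 1 :=
        hμint _ _ (by linarith) (by linarith) (by linarith) (by linarith)
      have hdisj : Disjoint J Iᶜ := by
        rw [Set.disjoint_compl_right_iff_subset]
        intro ω hω
        rcases hω with ⟨h1, h2⟩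
        exact ⟨by linarith, by linarith⟩
      have hadd := indicatorConstLp_disjoint_union (p := ⊤) (μ := PLeb) hJ hI.compl
        (measure_ne_top _ _) (measure_ne_top _ _) hdisj (1 : ℝ)
      have h2 : μ (indicatorConstLp ⊤ (hJ.union hI.compl)
          (measure_union_ne_top (measure_ne_top PLeb J) (measure_ne_top PLeb Iᶜ)) (1 : ℝ)) = 2 := by
        rw [hadd, map_add, hμJ, h]; norm_num
      rcases hμ01 (J ∪ Iᶜ) (hJ.union hI.compl) with h0 | h0 <;>
        rw [h2] at h0 <;> norm_num at h0
  set x : Lp ℝ ⊤ PLeb := n • e₂ + (-n) • e₁ with hx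
  have hμx : μ x = -n := by
    rw [hx, map_add, μ.map_smul, μ.map_smul, hμe₁, hμe₂]
    simp
  -- a.e. description of x
  have hxae : (x : ℝ → ℝ) =ᵐ[PLeb]
      fun ω => Iᶜ.indicator (fun _ => n) ω + I.indicator (fun _ => -n) ω := by
    have h1 : ⇑e₁ =ᵐ[PLeb] I.indicator fun _ => (1 : ℝ) := indicatorConstLp_coeFn
    have h2 : ⇑e₂ =ᵐ[PLeb] Iᶜ.indicator fun _ => (1 : ℝ) := indicatorConstLp_coeFn
    have h3 : ⇑x =ᵐ[PLeb] ⇑(n • e₂) + ⇑((-n) • e₁) := Lp.coeFn_add _ _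
    have h4 : ⇑(n • e₂) =ᵐ[PLeb] n • ⇑e₂ := Lp.coeFn_smul _ _
    have h5 : ⇑((-n) • e₁) =ᵐ[PLeb] (-n) • ⇑e₁ := Lp.coeFn_smul _ _
    filter_upwards [h1, h2, h3, h4, h5] with ω H1 H2 H3 H4 H5
    rw [H3]
    simp only [Pi.add_apply, H4, H5, Pi.smul_apply, H1, H2, smul_eq_mul]
    by_cases hω : ω ∈ I <;>
      simp [Set.indicator_of_mem, Set.indicator_of_notMem, hω]
  -- integrability & integral
  have hint1 : Integrable (Iᶜ.indicator fun _ => n) PLeb :=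
    (integrable_indicator_iff hI.compl).mpr
      (integrableOn_const (measure_lt_top _ _).ne)
  have hint2 : Integrable (I.indicator fun _ => -n) PLeb :=
    (integrable_indicator_iff hI).mpr
      (integrableOn_const (measure_lt_top _ _).ne)
  have hintx : ∫ ω, (x : ℝ → ℝ) ω ∂PLeb = n - 4 * n * δ := by
    rw [integral_congr_ae hxae, integral_add hint1 hint2,
      integral_indicator_const _ hI.compl, integral_indicator_const _ hI,
      measureReal_def, measureReal_def, hPIr, hPIcr]
    simp only [smul_eq_mul]
    ring
  have hδn : 4 * n * δ ≤ 1 / 2 := by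
    have h1 : (8 * n) * δ ≤ (8 * n) * (1 / (8 * n)) :=
      mul_le_mul_of_nonneg_left hδ8 (by positivity)
    rw [mul_one_div, div_self (by positivity : (8:ℝ) * n ≠ 0)] at h1
    nlinarith [h1]
  refine ⟨x, ?_, ?_, ?_⟩
  · rw [hC]
    simp only [Set.mem_setOf_eq]
    rw [hintx, hμx]
    nlinarith [hδpos]
  · intro k hk
    have hset : PLeb {ω | (k : ℝ) ≤ max (-(x : ℝ → ℝ) ω) 0} =
        PLeb {ω | (k : ℝ) ≤ max (-(Iᶜ.indicator (fun _ => n) ω + I.indicator (fun _ => -n) ω)) 0} := by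
      apply measure_congr
      filter_upwards [hxae] with ω hω
      show ((k : ℝ) ≤ max (-(x : ℝ → ℝ) ω) 0) = ((k : ℝ) ≤ max (-(Iᶜ.indicator (fun _ => n) ω + I.indicator (fun _ => -n) ω)) 0)
      rw [hω]
    rw [hset]
    have hval : ∀ ω, max (-(Iᶜ.indicator (fun _ => n) ω + I.indicator (fun _ => -n) ω)) 0
        = if ω ∈ I then n else 0 := by
      intro ω
      by_cases hω : ω ∈ I <;>
        simp [Set.indicator_of_mem, Set.indicator_of_notMem, hω,
          max_eq_left, max_eq_right, hnpos.le, neg_nonpos.mpr hnpos.le]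
    have h1k : (1 : ℝ) ≤ (k : ℝ) := by exact_mod_cast hk
    by_cases hkn : (k : ℝ) ≤ n
    · have hkK : k ≤ K := by
        have : (k : ℝ) ≤ (K : ℝ) := hkn.trans (Nat.le_ceil n)
        exact_mod_cast this
      have hδk : 2 * δ ≤ ε k := by
        have := hδε k (Finset.mem_Icc.mpr ⟨hk, hkK⟩)
        linarith
      calc PLeb {ω | (k : ℝ) ≤ max (-(Iᶜ.indicator (fun _ => n) ω + I.indicator (fun _ => -n) ω)) 0}
          ≤ PLeb I := by
            apply measure_mono
            intro ω hω
            simp only [Set.mem_setOf_eq, hval ω] at hω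
            by_contra hωI
            rw [if_neg hωI] at hω
            linarith
        _ ≤ ENNReal.ofReal (ε k) := by
            rw [hPI]; exact ENNReal.ofReal_le_ofReal hδk
    · have hempty : {ω | (k : ℝ) ≤ max (-(Iᶜ.indicator (fun _ => n) ω + I.indicator (fun _ => -n) ω)) 0} = ∅ := by
        rw [Set.eq_empty_iff_forall_notMem]
        intro ω hω
        rw [Set.mem_setOf_eq, hval ω] at hω
        push_neg at hkn
        by_cases hI' : ω ∈ I
        · rw [if_pos hI'] at hω; linarith
        · rw [if_neg hI'] at hω; linarith
      rw [hempty]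
      simp
  · rw [hintx]
    simp only [hn]
    linarith
end
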